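/- Assume m_c < m < 1 where m_c := max(0,(d-2)/d). Set γ₀ := 2/(1-m), 𝖰(γ) := ∫_0^1 Q(σ)·σ^{γ-3} dσ, c* := 𝖰(γ₀)^{-1/(1-m)}, and let γ* > 0 satisfy 𝖰(γ₀+γ*) = m·𝖰(γ₀). Then for every A ∈ ℝ, the function Ū(z) := c*·z^{-γ₀}·max(0, 1 - A·z^{-γ*}) is a subsolution: for every z > 0, Ū(z)^m ≤ ∫_z^∞ K(z,ρ)·Ū(ρ) dρ. -/

import Mathlib

open MeasureTheory Set Filter

/-- `t^p ≤ 1 + p(t-1)` for `t ≥ 0`, `0 ≤ p ≤ 1`. -/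
lemma aux_rpow_concave {t p : ℝ} (ht : 0 ≤ t) (hp0 : 0 ≤ p) (hp1 : p ≤ 1) :
    t ^ p ≤ 1 + p * (t - 1) := by
  have := rpow_one_add_le_one_add_mul_self (s := t - 1) (by linarith) hp0 hp1
  simpa using this

/-- `1 - t^p ≥ min 1 p * (1 - t)` for `t ∈ [0,1]`, `p > 0`. -/
lemma aux_one_sub_rpow {t p : ℝ} (ht0 : 0 ≤ t) (ht1 : t ≤ 1) (hp : 0 < p) :
    min 1 p * (1 - t) ≤ 1 - t ^ p := by
  rcases le_or_gt p 1 with h | h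
  · have := aux_rpow_concave ht0 hp.le h
    rw [min_eq_right h]; nlinarith
  · rw [min_eq_left h.le]
    have : t ^ p ≤ t := by
      rcases eq_or_lt_of_le ht0 with h0 | h0
      · rw [← h0, Real.zero_rpow (by positivity)]
      · calc t ^ p ≤ t ^ (1:ℝ) := Real.rpow_le_rpow_of_exponent_ge h0 ht1 h.le
          _ = t := Real.rpow_one t
    linarith

lemma aux_meas {α δ : ℝ} : Measurable (fun t : ℝ => (1 - t) ^ (-α) * t ^ δ) := by fun_prop

/-- Beta-type integrability: `(1-t)^(-α) * t^δ` integrable on `(0,1)` for `0 ≤ α < 1`, `δ > -1`. -/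
lemma aux_beta_integrable {α δ : ℝ} (hα0 : 0 ≤ α) (hα : α < 1) (hδ : -1 < δ) :
    IntegrableOn (fun t : ℝ => (1 - t) ^ (-α) * t ^ δ) (Ioo (0:ℝ) 1) := by
  have hmeas : ∀ s : Set ℝ, AEStronglyMeasurable (fun t : ℝ => (1 - t) ^ (-α) * t ^ δ)
      (volume.restrict s) := fun s => aux_meas.aestronglyMeasurable
  have h1 : IntegrableOn (fun t : ℝ => (1 - t) ^ (-α) * t ^ δ) (Ioc (0:ℝ) (1/2)) := by
    apply Integrable.mono' (g := fun t => ((1:ℝ)/2) ^ (-α) * t ^ δ)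
    · apply Integrable.const_mul
      have := intervalIntegral.intervalIntegrable_rpow' (a := 0) (b := 1/2) hδ
      rw [intervalIntegrable_iff_integrableOn_Ioc_of_le (by norm_num)] at this
      exact this
    · exact hmeas _
    · filter_upwards [ae_restrict_mem measurableSet_Ioc] with t ht
      have h2 : (1:ℝ)/2 ≤ 1 - t := by linarith [ht.2]
      have hb1 : (1 - t) ^ (-α) ≤ ((1:ℝ)/2) ^ (-α) :=
        Real.rpow_le_rpow_of_nonpos (by norm_num) h2 (by linarith)
      have ht0 : (0:ℝ) ≤ t ^ δ := Real.rpow_nonneg ht.1.le _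
      rw [Real.norm_eq_abs, abs_of_nonneg (mul_nonneg (Real.rpow_nonneg (by linarith) _) ht0)]
      exact mul_le_mul_of_nonneg_right hb1 ht0
  have h2 : IntegrableOn (fun t : ℝ => (1 - t) ^ (-α) * t ^ δ) (Ioc (1/2:ℝ) 1) := by
    set C : ℝ := max (((1:ℝ)/2) ^ δ) 1 with hC
    apply Integrable.mono' (g := fun t => C * (1 - t) ^ (-α))
    · apply Integrable.const_mul
      have h3 : IntervalIntegrable (fun x : ℝ => x ^ (-α)) volume 0 (1/2) :=
        intervalIntegral.intervalIntegrable_rpow' (by linarith)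
      have h4 := h3.comp_sub_left 1
      rw [intervalIntegrable_iff] at h4
      apply h4.mono_set
      rw [Set.uIoc_comm, Set.uIoc_of_le (by norm_num : (1-1/2:ℝ) ≤ 1-0)]
      norm_num
    · exact hmeas _
    · filter_upwards [ae_restrict_mem measurableSet_Ioc] with t ht
      have ht0 : (0:ℝ) < t := lt_trans (by norm_num) ht.1
      have htC : t ^ δ ≤ C := by
        rcases le_or_gt 0 δ with h | h
        · exact le_trans (Real.rpow_le_one ht0.le ht.2 h) (le_max_right _ _)
        · exact le_trans (Real.rpow_le_rpow_of_nonpos (by norm_num) ht.1.le h.le)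
            (le_max_left _ _)
      have h1t : (0:ℝ) ≤ (1 - t) ^ (-α) := Real.rpow_nonneg (by linarith [ht.2]) _
      rw [Real.norm_eq_abs, abs_of_nonneg (mul_nonneg h1t (Real.rpow_nonneg ht0.le _))]
      calc (1 - t) ^ (-α) * t ^ δ ≤ (1 - t) ^ (-α) * C := mul_le_mul_of_nonneg_left htC h1t
        _ = C * (1 - t) ^ (-α) := mul_comm _ _
  exact ((h1.union h2).mono_set (by
    intro x hx
    rcases le_or_gt x (1/2) with h | h
    · exact Or.inl ⟨hx.1, h⟩
    · exact Or.inr ⟨h, hx.2.le⟩))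

/-- nonnegativity of the kernel integrand on `[0,1]` -/
lemma aux_F_nonneg {α b δ : ℝ} (hb : 0 < b) {t : ℝ} (ht0 : 0 ≤ t) (ht1 : t ≤ 1) :
    0 ≤ (1 - t ^ (1/b)) ^ (-α) * t ^ δ := by
  have h1 : t ^ (1/b) ≤ 1 := Real.rpow_le_one ht0 ht1 (by positivity)
  exact mul_nonneg (Real.rpow_nonneg (by linarith) _) (Real.rpow_nonneg ht0 _)

/-- Integrability of the kernel integrand with general power weight. -/
lemma aux_F_integrable {α b δ : ℝ} (hb : 0 < b) (hα0 : 0 < α) (hα : α < 1) (hδ : -1 < δ) :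
    IntegrableOn (fun t : ℝ => (1 - t ^ (1/b)) ^ (-α) * t ^ δ) (Ioo (0:ℝ) 1) := by
  have hp : 0 < 1/b := by positivity
  set c : ℝ := min 1 (1/b) with hc
  have hcpos : 0 < c := lt_min one_pos hp
  apply Integrable.mono' (g := fun t => c ^ (-α) * ((1 - t) ^ (-α) * t ^ δ))
  · exact ((aux_beta_integrable hα0.le hα hδ).const_mul _)
  · exact (by fun_prop : Measurable fun t : ℝ => (1 - t ^ (1/b)) ^ (-α) * t ^ δ).aestronglyMeasurable
  · filter_upwards [ae_restrict_mem measurableSet_Ioo] with t ht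
    have h1 : c * (1 - t) ≤ 1 - t ^ (1/b) := aux_one_sub_rpow ht.1.le ht.2.le hp
    have h2 : 0 < c * (1 - t) := by have := ht.2; have := hcpos; nlinarith
    have h3 : (1 - t ^ (1/b)) ^ (-α) ≤ (c * (1 - t)) ^ (-α) :=
      Real.rpow_le_rpow_of_nonpos h2 h1 (by linarith)
    have h4 : (c * (1 - t)) ^ (-α) = c ^ (-α) * (1 - t) ^ (-α) :=
      Real.mul_rpow hcpos.le (by linarith [ht.2])
    have ht0 : (0:ℝ) ≤ t ^ δ := Real.rpow_nonneg ht.1.le _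
    rw [Real.norm_eq_abs, abs_of_nonneg (aux_F_nonneg hb ht.1.le ht.2.le)]
    calc (1 - t ^ (1/b)) ^ (-α) * t ^ δ ≤ (c * (1 - t)) ^ (-α) * t ^ δ :=
          mul_le_mul_of_nonneg_right h3 ht0
      _ = c ^ (-α) * ((1 - t) ^ (-α) * t ^ δ) := by rw [h4]; ring

/-- The kernel profile `Q(η) = (1/Γ(1-α)) ∫_η^1 (1-σ^{1/b})^{-α} σ^{1-d} dσ` for
`η ∈ (0,1)`; for `η ≥ 1` the interval `(η,1)` is empty, so `Q(η) = 0`. -/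
noncomputable def Qker (d : ℕ) (α b : ℝ) (η : ℝ) : ℝ :=
  (1 / Real.Gamma (1 - α)) *
    ∫ σ in Set.Ioo η 1, (1 - σ ^ (1 / b)) ^ (-α) * σ ^ (1 - (d:ℝ))

/-- The kernel `K(z,ρ) = ρ·Q(z/ρ)`. -/
noncomputable def Kker (d : ℕ) (α b : ℝ) (z ρ : ℝ) : ℝ := ρ * Qker d α b (z / ρ)

/-- The moment `𝖰(γ) = ∫_0^1 Q(σ)·σ^{γ-3} dσ`. -/
noncomputable def Qmoment (d : ℕ) (α b : ℝ) (γ : ℝ) : ℝ :=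
  ∫ σ in Set.Ioo (0:ℝ) 1, Qker d α b σ * σ ^ (γ - 3)
section QkerLemmas
variable {d : ℕ} {α b : ℝ} (hb : 0 < b) (hα0 : 0 < α) (hα1 : α < 1)
include hb hα0 hα1

lemma Gamma_inv_pos : 0 < 1 / Real.Gamma (1 - α) := by
  have := Real.Gamma_pos_of_pos (by linarith : (0:ℝ) < 1 - α)
  positivity

lemma Qker_nonneg {σ : ℝ} (hσ : 0 ≤ σ) : 0 ≤ Qker d α b σ := by
  apply mul_nonneg (Gamma_inv_pos hb hα0 hα1).le
  apply setIntegral_nonneg measurableSet_Ioo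
  exact fun t ht => aux_F_nonneg hb (le_trans hσ ht.1.le) ht.2.le

/-- Integrability of the raw integrand on `(σ,1)` for `σ ∈ (0,1)`. -/
lemma aux_F1_integrableOn {β σ : ℝ} (hσ0 : 0 < σ) (hσ1 : σ < 1)
    (hβ0 : 0 ≤ β) (hβd : (d:ℝ) - 2 < β) :
    IntegrableOn (fun t : ℝ => (1 - t ^ (1/b)) ^ (-α) * t ^ (1 - (d:ℝ))) (Ioo σ 1) := by
  apply Integrable.mono'
    (g := fun t => σ ^ (-β) * ((1 - t ^ (1/b)) ^ (-α) * t ^ (1 - (d:ℝ) + β)))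
  · exact ((aux_F_integrable hb hα0 hα1 (by linarith)).mono_set
      (Ioo_subset_Ioo_left hσ0.le)).const_mul _
  · exact (by fun_prop :
      Measurable fun t : ℝ => (1 - t ^ (1/b)) ^ (-α) * t ^ (1 - (d:ℝ))).aestronglyMeasurable
  · filter_upwards [ae_restrict_mem measurableSet_Ioo] with t ht
    have ht0 : 0 < t := lt_trans hσ0 ht.1
    have h1 : t ^ (1 - (d:ℝ)) = t ^ (1 - (d:ℝ) + β) * t ^ (-β) := by
      rw [← Real.rpow_add ht0]; ring_nf
    have h2 : t ^ (-β) ≤ σ ^ (-β) :=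
      Real.rpow_le_rpow_of_nonpos hσ0 ht.1.le (neg_nonpos.mpr hβ0)
    rw [Real.norm_eq_abs, abs_of_nonneg (aux_F_nonneg hb ht0.le ht.2.le), h1]
    have hF : 0 ≤ (1 - t ^ (1/b)) ^ (-α) * t ^ (1 - (d:ℝ) + β) :=
      aux_F_nonneg hb ht0.le ht.2.le
    calc (1 - t ^ (1/b)) ^ (-α) * (t ^ (1 - (d:ℝ) + β) * t ^ (-β))
        = ((1 - t ^ (1/b)) ^ (-α) * t ^ (1 - (d:ℝ) + β)) * t ^ (-β) := by ring
      _ ≤ ((1 - t ^ (1/b)) ^ (-α) * t ^ (1 - (d:ℝ) + β)) * σ ^ (-β) :=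
          mul_le_mul_of_nonneg_left h2 hF
      _ = σ ^ (-β) * ((1 - t ^ (1/b)) ^ (-α) * t ^ (1 - (d:ℝ) + β)) := by ring

lemma Qker_pos {σ : ℝ} (hσ0 : 0 < σ) (hσ1 : σ < 1) (hβ : ∃ β : ℝ, 0 ≤ β ∧ (d:ℝ) - 2 < β) :
    0 < Qker d α b σ := by
  obtain ⟨β, hβ0, hβd⟩ := hβ
  apply mul_pos (Gamma_inv_pos hb hα0 hα1)
  have hnn : 0 ≤ᵐ[volume.restrict (Ioo σ 1)]
      fun t : ℝ => (1 - t ^ (1/b)) ^ (-α) * t ^ (1 - (d:ℝ)) := by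
    filter_upwards [ae_restrict_mem measurableSet_Ioo] with t ht
    exact aux_F_nonneg hb (le_trans hσ0.le ht.1.le) ht.2.le
  rw [setIntegral_pos_iff_support_of_nonneg_ae hnn (aux_F1_integrableOn hb hα0 hα1 hσ0 hσ1 hβ0 hβd)]
  have hsub : Ioo σ 1 ⊆ Function.support
      (fun t : ℝ => (1 - t ^ (1/b)) ^ (-α) * t ^ (1 - (d:ℝ))) ∩ Ioo σ 1 := by
    intro t ht
    refine ⟨?_, ht⟩
    have ht0 : 0 < t := lt_trans hσ0 ht.1
    have h1 : t ^ (1/b) < 1 := Real.rpow_lt_one ht0.le ht.2 (by positivity)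
    have : 0 < (1 - t ^ (1/b)) ^ (-α) * t ^ (1 - (d:ℝ)) :=
      mul_pos (Real.rpow_pos_of_pos (by linarith) _) (Real.rpow_pos_of_pos ht0 _)
    exact ne_of_gt this
  calc (0:ENNReal) < volume (Ioo σ 1) := by
        rw [Real.volume_Ioo]; rw [ENNReal.ofReal_pos]; linarith
    _ ≤ _ := measure_mono hsub

lemma Qker_antitoneOn : AntitoneOn (Qker d α b) (Ioo (0:ℝ) 1) := by
  intro σ₁ h1 σ₂ h2 h12
  apply mul_le_mul_of_nonneg_left _ (Gamma_inv_pos hb hα0 hα1).le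
  apply setIntegral_mono_set
  · exact aux_F1_integrableOn hb hα0 hα1 (β := max 0 ((d:ℝ)-2) + 1) h1.1 h1.2
      (by positivity) (lt_of_le_of_lt (le_max_right _ _) (lt_add_one _))
  · filter_upwards [ae_restrict_mem measurableSet_Ioo] with t ht
    exact aux_F_nonneg hb (le_trans h1.1.le ht.1.le) ht.2.le
  · exact HasSubset.Subset.eventuallyLE (Ioo_subset_Ioo_left h12)
/-- The constant in the bound `Qker σ ≤ σ^(-β) * Cbound`. -/
noncomputable def Cbound (d : ℕ) (α b β : ℝ) : ℝ :=
  (1 / Real.Gamma (1 - α)) *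
    ∫ t in Set.Ioo (0:ℝ) 1, (1 - t ^ (1/b)) ^ (-α) * t ^ (1 - (d:ℝ) + β)

lemma Cbound_nonneg {β : ℝ} : 0 ≤ Cbound d α b β := by
  apply mul_nonneg (Gamma_inv_pos hb hα0 hα1).le
  exact setIntegral_nonneg measurableSet_Ioo fun t ht => aux_F_nonneg hb ht.1.le ht.2.le

lemma Qker_le_bound {β σ : ℝ} (hσ0 : 0 < σ) (hσ1 : σ < 1) (hβ0 : 0 ≤ β)
    (hβd : (d:ℝ) - 2 < β) :
    Qker d α b σ ≤ σ ^ (-β) * Cbound d α b β := by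
  have hβint : -1 < 1 - (d:ℝ) + β := by linarith
  have hFβ : IntegrableOn (fun t : ℝ => (1 - t ^ (1/b)) ^ (-α) * t ^ (1 - (d:ℝ) + β))
      (Ioo (0:ℝ) 1) := aux_F_integrable hb hα0 hα1 hβint
  have step1 : (∫ t in Ioo σ 1, (1 - t ^ (1/b)) ^ (-α) * t ^ (1 - (d:ℝ)))
      ≤ ∫ t in Ioo σ 1, σ ^ (-β) * ((1 - t ^ (1/b)) ^ (-α) * t ^ (1 - (d:ℝ) + β)) := by
    apply setIntegral_mono_on
    · exact aux_F1_integrableOn hb hα0 hα1 hσ0 hσ1 hβ0 hβd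
    · exact (hFβ.mono_set (Ioo_subset_Ioo_left hσ0.le)).const_mul _
    · exact measurableSet_Ioo
    · intro t ht
      have ht0 : 0 < t := lt_trans hσ0 ht.1
      have h1 : t ^ (1 - (d:ℝ)) = t ^ (1 - (d:ℝ) + β) * t ^ (-β) := by
        rw [← Real.rpow_add ht0]; ring_nf
      have h2 : t ^ (-β) ≤ σ ^ (-β) :=
        Real.rpow_le_rpow_of_nonpos hσ0 ht.1.le (neg_nonpos.mpr hβ0)
      have hF : 0 ≤ (1 - t ^ (1/b)) ^ (-α) * t ^ (1 - (d:ℝ) + β) :=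
        aux_F_nonneg hb ht0.le ht.2.le
      rw [h1]
      calc (1 - t ^ (1/b)) ^ (-α) * (t ^ (1 - (d:ℝ) + β) * t ^ (-β))
          = ((1 - t ^ (1/b)) ^ (-α) * t ^ (1 - (d:ℝ) + β)) * t ^ (-β) := by ring
        _ ≤ ((1 - t ^ (1/b)) ^ (-α) * t ^ (1 - (d:ℝ) + β)) * σ ^ (-β) :=
            mul_le_mul_of_nonneg_left h2 hF
        _ = σ ^ (-β) * ((1 - t ^ (1/b)) ^ (-α) * t ^ (1 - (d:ℝ) + β)) := by ring
  have step2 : (∫ t in Ioo σ 1, (1 - t ^ (1/b)) ^ (-α) * t ^ (1 - (d:ℝ) + β))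
      ≤ ∫ t in Ioo (0:ℝ) 1, (1 - t ^ (1/b)) ^ (-α) * t ^ (1 - (d:ℝ) + β) := by
    apply setIntegral_mono_set hFβ
    · filter_upwards [ae_restrict_mem measurableSet_Ioo] with t ht
      exact aux_F_nonneg hb ht.1.le ht.2.le
    · exact HasSubset.Subset.eventuallyLE (Ioo_subset_Ioo_left hσ0.le)
  have hC := Gamma_inv_pos hb hα0 (α := α) hα1
  calc Qker d α b σ ≤ (1 / Real.Gamma (1 - α)) *
        ∫ t in Ioo σ 1, σ ^ (-β) * ((1 - t ^ (1/b)) ^ (-α) * t ^ (1 - (d:ℝ) + β)) :=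
        mul_le_mul_of_nonneg_left step1 hC.le
    _ = σ ^ (-β) * ((1 / Real.Gamma (1 - α)) *
        ∫ t in Ioo σ 1, (1 - t ^ (1/b)) ^ (-α) * t ^ (1 - (d:ℝ) + β)) := by
        rw [integral_const_mul]; ring
    _ ≤ σ ^ (-β) * Cbound d α b β := by
        apply mul_le_mul_of_nonneg_left _ (Real.rpow_nonneg hσ0.le _)
        exact mul_le_mul_of_nonneg_left step2 hC.le

/-- Integrability of the moment integrand. -/
lemma Qmoment_integrand_integrable {γ : ℝ} (hγ : max 0 ((d:ℝ) - 2) + 2 < γ) :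
    IntegrableOn (fun σ : ℝ => Qker d α b σ * σ ^ (γ - 3)) (Ioo (0:ℝ) 1) := by
  set β : ℝ := (max 0 ((d:ℝ) - 2) + (γ - 2)) / 2 with hβ
  have hm : 0 ≤ max 0 ((d:ℝ) - 2) := le_max_left _ _
  have hβ0 : 0 ≤ β := by simp only [hβ]; linarith
  have hβd : (d:ℝ) - 2 < β := by
    have : (d:ℝ) - 2 ≤ max 0 ((d:ℝ) - 2) := le_max_right _ _
    simp only [hβ]; linarith
  have hβγ : β < γ - 2 := by simp only [hβ]; linarith
  apply Integrable.mono' (g := fun σ => Cbound d α b β * σ ^ (γ - 3 - β))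
  · apply Integrable.const_mul
    have := intervalIntegral.intervalIntegrable_rpow' (a := 0) (b := 1) (r := γ - 3 - β)
      (by linarith)
    rw [intervalIntegrable_iff_integrableOn_Ioo_of_le (by norm_num)] at this
    exact this
  · have h1 : AEMeasurable (Qker d α b) (volume.restrict (Ioo (0:ℝ) 1)) :=
      aemeasurable_restrict_of_antitoneOn measurableSet_Ioo (Qker_antitoneOn hb hα0 hα1)
    have h2 : AEMeasurable (fun σ : ℝ => σ ^ (γ - 3)) (volume.restrict (Ioo (0:ℝ) 1)) :=
      Measurable.aemeasurable (by fun_prop)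
    exact (h1.mul h2).aestronglyMeasurable
  · filter_upwards [ae_restrict_mem measurableSet_Ioo] with σ hσ
    have hq0 : 0 ≤ Qker d α b σ := Qker_nonneg hb hα0 hα1 hσ.1.le
    have hs0 : 0 ≤ σ ^ (γ - 3) := Real.rpow_nonneg hσ.1.le _
    rw [Real.norm_eq_abs, abs_of_nonneg (mul_nonneg hq0 hs0)]
    have h1 : Qker d α b σ ≤ σ ^ (-β) * Cbound d α b β :=
      Qker_le_bound hb hα0 hα1 hσ.1 hσ.2 hβ0 hβd
    calc Qker d α b σ * σ ^ (γ - 3) ≤ (σ ^ (-β) * Cbound d α b β) * σ ^ (γ - 3) :=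
          mul_le_mul_of_nonneg_right h1 hs0
      _ = Cbound d α b β * σ ^ (γ - 3 - β) := by
          rw [show γ - 3 - β = -β + (γ - 3) by ring, Real.rpow_add hσ.1]; ring

/-- Positivity of the moment. -/
lemma Qmoment_pos {γ : ℝ} (hγ : max 0 ((d:ℝ) - 2) + 2 < γ) : 0 < Qmoment d α b γ := by
  have hnn : 0 ≤ᵐ[volume.restrict (Ioo (0:ℝ) 1)]
      fun σ : ℝ => Qker d α b σ * σ ^ (γ - 3) := by
    filter_upwards [ae_restrict_mem measurableSet_Ioo] with σ hσ
    exact mul_nonneg (Qker_nonneg hb hα0 hα1 hσ.1.le) (Real.rpow_nonneg hσ.1.le _)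
  rw [Qmoment, setIntegral_pos_iff_support_of_nonneg_ae hnn
    (Qmoment_integrand_integrable hb hα0 hα1 hγ)]
  have hsub : Ioo (0:ℝ) 1 ⊆ Function.support
      (fun σ : ℝ => Qker d α b σ * σ ^ (γ - 3)) ∩ Ioo (0:ℝ) 1 := by
    intro σ hσ
    refine ⟨ne_of_gt (mul_pos (Qker_pos hb hα0 hα1 (hβ := ⟨max 0 ((d:ℝ)-2) + 1, by positivity, lt_of_le_of_lt (le_max_right _ _) (lt_add_one _)⟩) hσ.1 hσ.2)
      (Real.rpow_pos_of_pos hσ.1 _)), hσ⟩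
  calc (0:ENNReal) < volume (Ioo (0:ℝ) 1) := by
        rw [Real.volume_Ioo]; rw [ENNReal.ofReal_pos]; norm_num
    _ ≤ _ := measure_mono hsub

end QkerLemmas

section COV
variable {z : ℝ} (hz : 0 < z)
include hz

lemma cov_image : (fun σ : ℝ => z / σ) '' Ioo 0 1 = Ioi z := by
  ext ρ
  constructor
  · rintro ⟨σ, hσ, rfl⟩
    have : z < z / σ := by
      rw [lt_div_iff₀ hσ.1]
      nlinarith [hσ.2]
    exact this
  · intro hρ
    have hρ0 : 0 < ρ := lt_trans hz hρ
    refine ⟨z / ρ, ⟨by positivity, by rwa [div_lt_one hρ0]⟩, ?_⟩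
    field_simp

lemma cov_deriv : ∀ σ ∈ Ioo (0:ℝ) 1, HasDerivWithinAt (fun σ : ℝ => z / σ)
    (-(z / σ ^ 2)) (Ioo (0:ℝ) 1) σ := by
  intro σ hσ
  have h := ((hasDerivAt_inv (ne_of_gt hσ.1)).const_mul z)
  have heq : (fun σ : ℝ => z * σ⁻¹) = fun σ : ℝ => z / σ := by
    funext x; rw [div_eq_mul_inv]
  rw [heq] at h
  have : z * -(σ ^ 2)⁻¹ = -(z / σ ^ 2) := by field_simp
  rw [this] at h
  exact h.hasDerivWithinAt

lemma cov_inj : InjOn (fun σ : ℝ => z / σ) (Ioo (0:ℝ) 1) := by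
  intro a ha c hc h
  have ha0 : a ≠ 0 := ne_of_gt ha.1
  have hc0 : c ≠ 0 := ne_of_gt hc.1
  have hz0 : z ≠ 0 := ne_of_gt hz
  field_simp at h
  rcases h with h | h
  · rfl

lemma cov_integral (g : ℝ → ℝ) :
    ∫ ρ in Ioi z, g ρ = ∫ σ in Ioo (0:ℝ) 1, |(-(z / σ ^ 2))| * g (z / σ) := by
  rw [← cov_image hz, integral_image_eq_integral_abs_deriv_smul measurableSet_Ioo
    (cov_deriv hz) (cov_inj hz)]
  simp [smul_eq_mul]

lemma cov_integrable (g : ℝ → ℝ) :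
    IntegrableOn g (Ioi z) ↔
      IntegrableOn (fun σ : ℝ => |(-(z / σ ^ 2))| * g (z / σ)) (Ioo (0:ℝ) 1) := by
  rw [← cov_image hz, integrableOn_image_iff_integrableOn_abs_deriv_smul measurableSet_Ioo
    (cov_deriv hz) (cov_inj hz)]
  simp [smul_eq_mul]

/-- the pointwise identity on (0,1) -/
lemma cov_pointwise {d : ℕ} {α b γ : ℝ} {σ : ℝ} (hσ : σ ∈ Ioo (0:ℝ) 1) :
    |(-(z / σ ^ 2))| * ((z / σ) * Qker d α b (z / (z / σ)) * (z / σ) ^ (-γ))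
      = z ^ (2 - γ) * (Qker d α b σ * σ ^ (γ - 3)) := by
  have hσ0 : 0 < σ := hσ.1
  have hzσ : (0:ℝ) < z / σ := by positivity
  have h0 : z / (z / σ) = σ := by field_simp
  have h1 : (z / σ) ^ (-γ) = z ^ (-γ) / σ ^ (-γ) := Real.div_rpow hz.le hσ0.le _
  have h2 : σ ^ (-γ) = (σ ^ γ)⁻¹ := Real.rpow_neg hσ0.le _
  have h3 : z ^ (2 - γ) = z ^ (2:ℝ) * z ^ (-γ) := by
    rw [← Real.rpow_add hz]; ring_nf
  have h4 : σ ^ (γ - 3) = σ ^ γ * σ ^ (-(3:ℝ)) := by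
    rw [← Real.rpow_add hσ0]; ring_nf
  have h5 : σ ^ (-(3:ℝ)) = (σ ^ (3:ℕ))⁻¹ := by
    rw [Real.rpow_neg hσ0.le, ← Real.rpow_natCast σ 3]; norm_num
  have h6 : |(-(z / σ ^ 2))| = z / σ ^ 2 := by
    rw [abs_neg, abs_of_pos (by positivity)]
  rw [h0, h1, h2, h3, h4, h5, h6, Real.rpow_two]
  have hσγ : σ ^ γ ≠ 0 := ne_of_gt (Real.rpow_pos_of_pos hσ0 _)
  field_simp

lemma moment_integral_eq {d : ℕ} {α b γ : ℝ} :
    ∫ ρ in Ioi z, ρ * Qker d α b (z / ρ) * ρ ^ (-γ)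
      = z ^ (2 - γ) * Qmoment d α b γ := by
  rw [cov_integral hz (fun ρ => ρ * Qker d α b (z / ρ) * ρ ^ (-γ))]
  rw [show (∫ σ in Ioo (0:ℝ) 1,
      |(-(z / σ ^ 2))| * ((z / σ) * Qker d α b (z / (z / σ)) * (z / σ) ^ (-γ)))
      = ∫ σ in Ioo (0:ℝ) 1, z ^ (2 - γ) * (Qker d α b σ * σ ^ (γ - 3)) from
    setIntegral_congr_fun measurableSet_Ioo (fun σ hσ => cov_pointwise hz hσ)]
  rw [integral_const_mul, Qmoment]

lemma moment_integrableOn {d : ℕ} {α b γ : ℝ}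
    (h : IntegrableOn (fun σ : ℝ => Qker d α b σ * σ ^ (γ - 3)) (Ioo (0:ℝ) 1)) :
    IntegrableOn (fun ρ : ℝ => ρ * Qker d α b (z / ρ) * ρ ^ (-γ)) (Ioi z) := by
  rw [cov_integrable hz]
  apply (h.const_mul (z ^ (2 - γ))).congr
  filter_upwards [ae_restrict_mem measurableSet_Ioo] with σ hσ
  exact (cov_pointwise hz hσ).symm

end COV

/-- in the mildly-fast-diffusion range `m_c < m < 1`, with `γ₀ = 2/(1-m)`,
`c* = 𝖰(γ₀)^{-1/(1-m)}` and `γ* > 0` satisfying `𝖰(γ₀+γ*) = m·𝖰(γ₀)`, the function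
`Ū(z) = c*·z^{-γ₀}·max(0, 1 - A·z^{-γ*})` is a subsolution of the profile equation. -/
theorem tail_subsolution (d : ℕ) (hd : 1 ≤ d) (α m b : ℝ)
    (hα : α ∈ Set.Ioo (0:ℝ) 1)
    (hmc : max 0 (((d:ℝ) - 2) / d) < m) (hm1 : m < 1)
    (hb : b = α / (2 + (d:ℝ) * (m - 1)))
    (γstar : ℝ) (hγpos : 0 < γstar)
    (hγeq : Qmoment d α b (2 / (1 - m) + γstar) = m * Qmoment d α b (2 / (1 - m)))
    (cstar : ℝ) (hc : cstar = Qmoment d α b (2 / (1 - m)) ^ (-(1 / (1 - m))))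
    (A : ℝ) :
    ∀ z : ℝ, 0 < z →
      (cstar * z ^ (-(2 / (1 - m))) * max 0 (1 - A * z ^ (-γstar))) ^ m
        ≤ ∫ ρ in Set.Ioi z,
            Kker d α b z ρ * (cstar * ρ ^ (-(2 / (1 - m))) * max 0 (1 - A * ρ ^ (-γstar))) := by
  intro z hz
  obtain ⟨hα0, hα1⟩ := hα
  have hm0 : 0 < m := lt_of_le_of_lt (le_max_left _ _) hmc
  have h1m : 0 < 1 - m := by linarith
  have hd1 : (1:ℝ) ≤ d := by exact_mod_cast hd
  have hd0 : (0:ℝ) < d := by linarith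
  have hdm : (d:ℝ) * (1 - m) < 2 := by
    have h2 := lt_of_le_of_lt (le_max_right 0 (((d:ℝ) - 2) / d)) hmc
    rw [div_lt_iff₀ hd0] at h2
    nlinarith
  have hb0 : 0 < b := by rw [hb]; apply div_pos hα0; nlinarith
  set γ₀ := 2 / (1 - m) with hγ₀
  have hγ₀big : max 0 ((d:ℝ) - 2) + 2 < γ₀ := by
    rcases le_total ((d:ℝ) - 2) 0 with h | h
    · rw [max_eq_left h, hγ₀, lt_div_iff₀ h1m]; nlinarith
    · rw [max_eq_right h, hγ₀, lt_div_iff₀ h1m]; nlinarith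
  have hγ₁big : max 0 ((d:ℝ) - 2) + 2 < γ₀ + γstar := by linarith
  have hQ0 : 0 < Qmoment d α b γ₀ := Qmoment_pos hb0 hα0 hα1 hγ₀big
  have hcpos : 0 < cstar := by rw [hc]; exact Real.rpow_pos_of_pos hQ0 _
  have hIf : IntegrableOn (fun ρ : ℝ => ρ * Qker d α b (z/ρ) * ρ ^ (-γ₀)) (Ioi z) :=
    moment_integrableOn hz (Qmoment_integrand_integrable hb0 hα0 hα1 hγ₀big)
  have hIg : IntegrableOn (fun ρ : ℝ => ρ * Qker d α b (z/ρ) * ρ ^ (-(γ₀+γstar))) (Ioi z) :=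
    moment_integrableOn hz (Qmoment_integrand_integrable hb0 hα0 hα1 hγ₁big)
  set P : ℝ → ℝ := fun ρ => ρ * Qker d α b (z/ρ) * ρ ^ (-γ₀) with hP
  set Pg : ℝ → ℝ := fun ρ => ρ * Qker d α b (z/ρ) * ρ ^ (-(γ₀+γstar)) with hPg
  have hPnn : ∀ ρ ∈ Ioi z, 0 ≤ P ρ ∧ 0 ≤ Pg ρ ∧ Pg ρ = P ρ * ρ ^ (-γstar) := by
    intro ρ hρ
    have hρ0 : 0 < ρ := lt_trans hz hρ
    have hq : 0 ≤ Qker d α b (z/ρ) := Qker_nonneg hb0 hα0 hα1 (by positivity)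
    refine ⟨mul_nonneg (mul_nonneg hρ0.le hq) (Real.rpow_nonneg hρ0.le _),
      mul_nonneg (mul_nonneg hρ0.le hq) (Real.rpow_nonneg hρ0.le _), ?_⟩
    simp only [hP, hPg]
    rw [show -(γ₀+γstar) = -γ₀ + (-γstar) by ring, Real.rpow_add hρ0]
    ring
  have hGeq : ∀ ρ : ℝ, Kker d α b z ρ * (cstar * ρ ^ (-γ₀) * max 0 (1 - A * ρ ^ (-γstar)))
      = cstar * P ρ * max 0 (1 - A * ρ ^ (-γstar)) := by
    intro ρ; simp only [Kker, hP]; ring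
  have hIntEq : (∫ ρ in Ioi z,
      Kker d α b z ρ * (cstar * ρ ^ (-γ₀) * max 0 (1 - A * ρ ^ (-γstar))))
      = ∫ ρ in Ioi z, cstar * P ρ * max 0 (1 - A * ρ ^ (-γstar)) :=
    setIntegral_congr_fun measurableSet_Ioi (fun ρ _ => hGeq ρ)
  rw [hIntEq]
  have hGint : IntegrableOn (fun ρ => cstar * P ρ * max 0 (1 - A * ρ ^ (-γstar))) (Ioi z) := by
    apply Integrable.mono' (g := fun ρ => cstar * P ρ + (cstar * |A|) * Pg ρ)
    · exact (hIf.const_mul cstar).add (hIg.const_mul (cstar * |A|))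
    · apply AEStronglyMeasurable.mul
      · exact hIf.aestronglyMeasurable.const_mul cstar
      · exact (measurable_const.max
          (by fun_prop : Measurable fun ρ:ℝ => 1 - A * ρ ^ (-γstar))).aestronglyMeasurable
    · filter_upwards [ae_restrict_mem measurableSet_Ioi] with ρ hρ
      obtain ⟨hp, hpg, hrel⟩ := hPnn ρ hρ
      have hρ0 : 0 < ρ := lt_trans hz hρ
      have hr : 0 ≤ ρ ^ (-γstar) := Real.rpow_nonneg hρ0.le _
      have hmax : max 0 (1 - A * ρ ^ (-γstar)) ≤ 1 + |A| * ρ ^ (-γstar) := by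
        apply max_le
        · positivity
        · have h' : -A ≤ |A| := neg_le_abs A
          nlinarith
      have hnn : 0 ≤ cstar * P ρ * max 0 (1 - A * ρ ^ (-γstar)) :=
        mul_nonneg (mul_nonneg hcpos.le hp) (le_max_left _ _)
      rw [Real.norm_eq_abs, abs_of_nonneg hnn]
      calc cstar * P ρ * max 0 (1 - A * ρ ^ (-γstar))
          ≤ cstar * P ρ * (1 + |A| * ρ ^ (-γstar)) :=
            mul_le_mul_of_nonneg_left hmax (mul_nonneg hcpos.le hp)
        _ = cstar * P ρ + (cstar * |A|) * (P ρ * ρ ^ (-γstar)) := by ring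
        _ = cstar * P ρ + (cstar * |A|) * Pg ρ := by rw [← hrel]
  have hsmall_int : IntegrableOn (fun ρ => cstar * P ρ - (cstar * A) * Pg ρ) (Ioi z) :=
    (hIf.const_mul cstar).sub (hIg.const_mul (cstar*A))
  have hmono : (∫ ρ in Ioi z, (cstar * P ρ - (cstar * A) * Pg ρ))
      ≤ ∫ ρ in Ioi z, cstar * P ρ * max 0 (1 - A * ρ ^ (-γstar)) := by
    apply setIntegral_mono_on hsmall_int hGint measurableSet_Ioi
    intro ρ hρ
    obtain ⟨hp, hpg, hrel⟩ := hPnn ρ hρ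
    have heq : cstar * P ρ - (cstar*A) * Pg ρ = cstar * P ρ * (1 - A * ρ ^ (-γstar)) := by
      rw [hrel]; ring
    rw [heq]
    exact mul_le_mul_of_nonneg_left (le_max_right _ _) (mul_nonneg hcpos.le hp)
  have hval : (∫ ρ in Ioi z, (cstar * P ρ - (cstar * A) * Pg ρ))
      = cstar * (z ^ (2-γ₀) * Qmoment d α b γ₀)
        - (cstar * A) * (z ^ (2-(γ₀+γstar)) * Qmoment d α b (γ₀+γstar)) := by
    rw [integral_sub (hIf.const_mul cstar) (hIg.const_mul (cstar*A)),
      integral_const_mul, integral_const_mul, hP, hPg,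
      moment_integral_eq hz, moment_integral_eq hz]
  rcases le_or_gt (1 - A * z ^ (-γstar)) 0 with hcase | hcase
  · have hmz : max 0 (1 - A * z ^ (-γstar)) = 0 := max_eq_left hcase
    rw [hmz, mul_zero, Real.zero_rpow (ne_of_gt hm0)]
    apply setIntegral_nonneg measurableSet_Ioi
    intro ρ hρ
    obtain ⟨hp, _, _⟩ := hPnn ρ hρ
    exact mul_nonneg (mul_nonneg hcpos.le hp) (le_max_left _ _)
  · have hmaxz : max 0 (1 - A * z ^ (-γstar)) = 1 - A * z ^ (-γstar) := max_eq_right hcase.le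
    rw [hmaxz]
    have hcz : 0 ≤ cstar * z ^ (-γ₀) := mul_nonneg hcpos.le (Real.rpow_nonneg hz.le _)
    have e0 : (cstar * z ^ (-γ₀) * (1 - A * z ^ (-γstar))) ^ m
        = (cstar * z ^ (-γ₀)) ^ m * (1 - A * z ^ (-γstar)) ^ m := Real.mul_rpow hcz hcase.le
    have e1 : (1 - A * z ^ (-γstar)) ^ m ≤ 1 - m * (A * z ^ (-γstar)) := by
      have h := aux_rpow_concave (t := 1 - A * z ^ (-γstar)) hcase.le hm0.le hm1.le
      have h2 : 1 + m * ((1 - A * z ^ (-γstar)) - 1) = 1 - m * (A * z ^ (-γstar)) := by ring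
      linarith
    have q2 : -γ₀ * m = 2 - γ₀ := by rw [hγ₀]; field_simp; ring
    have ecm : (cstar * z ^ (-γ₀)) ^ m = cstar * Qmoment d α b γ₀ * z ^ (2 - γ₀) := by
      rw [Real.mul_rpow hcpos.le (Real.rpow_nonneg hz.le _), ← Real.rpow_mul hz.le,
        hc, ← Real.rpow_mul hQ0.le]
      have q1 : Qmoment d α b γ₀ ^ (-(1/(1-m))) * Qmoment d α b γ₀
          = Qmoment d α b γ₀ ^ (-(1/(1-m)) * m) := by
        nth_rewrite 2 [← Real.rpow_one (Qmoment d α b γ₀)]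
        rw [← Real.rpow_add hQ0]
        congr 1
        field_simp
        ring
      rw [q2, ← q1]
    have ez : z ^ (2 - (γ₀ + γstar)) = z ^ (2-γ₀) * z ^ (-γstar) := by
      rw [← Real.rpow_add hz]; ring_nf
    calc (cstar * z ^ (-γ₀) * (1 - A * z ^ (-γstar))) ^ m
        = (cstar * z ^ (-γ₀)) ^ m * (1 - A * z ^ (-γstar)) ^ m := e0
      _ ≤ (cstar * z ^ (-γ₀)) ^ m * (1 - m * (A * z ^ (-γstar))) :=
          mul_le_mul_of_nonneg_left e1 (Real.rpow_nonneg hcz m)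
      _ = cstar * (z ^ (2-γ₀) * Qmoment d α b γ₀)
          - (cstar * A) * (z ^ (2-(γ₀+γstar)) * Qmoment d α b (γ₀+γstar)) := by
          rw [ecm, hγeq, ez]; ring
      _ = ∫ ρ in Ioi z, (cstar * P ρ - (cstar * A) * Pg ρ) := hval.symm
      _ ≤ _ := hmono
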